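/- Let q = 2^s, S = F_q[y_1,...,y_m,x_m,...,x_1], and for i ≥ 2 let ξ_i = Σ_{j=1}^m (x_j y_j^{q^i} + y_j x_j^{q^i}). Then the complete Steenrod operator satisfies P(t)(ξ_i) = ξ_i + ξ_{i-1}^q t + ξ_{i+1} t^{q^i} + ξ_i^q t^{q^i+1}. -/
import Mathlib


open MvPolynomial

/-- The complete Steenrod operator `P(t)`, the algebra homomorphism determined
by `v ↦ v + v^q t` on degree-one elements. -/
noncomputable def stP (q : ℕ) (σ : Type*) (F : Type*) [Field F] :
    MvPolynomial σ F →ₐ[F] Polynomial (MvPolynomial σ F) :=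
  MvPolynomial.aeval fun i =>
    Polynomial.C (MvPolynomial.X i) + Polynomial.C (MvPolynomial.X i ^ q) * Polynomial.X

/-- `ξ_i = Σ_j (x_j y_j^{q^i} + y_j x_j^{q^i})` in `S = F_q[y_1,…,y_m,x_m,…,x_1]`
(`inl j` is `y_j`, `inr j` is `x_j`). -/
noncomputable def xiGen (q m : ℕ) (F : Type*) [Field F] (i : ℕ) :
    MvPolynomial (Fin m ⊕ Fin m) F :=
  ∑ j : Fin m, (X (Sum.inr j) * X (Sum.inl j) ^ q ^ i
    + X (Sum.inl j) * X (Sum.inr j) ^ q ^ i)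

-- per-term key lemma
lemma key {R : Type*} [CommRing R] [CharP R 2] (s : ℕ) (k : ℕ) (x y : R) :
    (Polynomial.C x + Polynomial.C (x ^ 2 ^ s) * Polynomial.X) *
      (Polynomial.C y + Polynomial.C (y ^ 2 ^ s) * Polynomial.X) ^ (2 ^ s) ^ (k + 2)
    + (Polynomial.C y + Polynomial.C (y ^ 2 ^ s) * Polynomial.X) *
      (Polynomial.C x + Polynomial.C (x ^ 2 ^ s) * Polynomial.X) ^ (2 ^ s) ^ (k + 2)
    = Polynomial.C (x * y ^ (2 ^ s) ^ (k + 2) + y * x ^ (2 ^ s) ^ (k + 2))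
      + Polynomial.C ((x * y ^ (2 ^ s) ^ (k + 1) + y * x ^ (2 ^ s) ^ (k + 1)) ^ 2 ^ s) * Polynomial.X
      + Polynomial.C (x * y ^ (2 ^ s) ^ (k + 3) + y * x ^ (2 ^ s) ^ (k + 3)) * Polynomial.X ^ (2 ^ s) ^ (k + 2)
      + Polynomial.C ((x * y ^ (2 ^ s) ^ (k + 2) + y * x ^ (2 ^ s) ^ (k + 2)) ^ 2 ^ s) * Polynomial.X ^ ((2 ^ s) ^ (k + 2) + 1) := by
  have hfr : ∀ (a b : Polynomial R) (n : ℕ), (a + b) ^ (2 ^ s) ^ n = a ^ (2 ^ s) ^ n + b ^ (2 ^ s) ^ n := by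
    intro a b n
    rw [show (2 ^ s) ^ n = 2 ^ (s * n) from (pow_mul 2 s n).symm]
    exact add_pow_char_pow a b 2 (s * n)
  have hfrR : ∀ (a b : R), (a + b) ^ 2 ^ s = a ^ 2 ^ s + b ^ 2 ^ s := fun a b =>
    add_pow_char_pow a b 2 s
  have he : ∀ (z : R) (n : ℕ), (z ^ 2 ^ s) ^ (2 ^ s) ^ n = z ^ (2 ^ s) ^ (n + 1) := by
    intro z n
    rw [← pow_mul, ← pow_succ']
  have he2 : ∀ (z : R) (n : ℕ), (z ^ (2 ^ s) ^ n) ^ 2 ^ s = z ^ (2 ^ s) ^ (n + 1) := by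
    intro z n
    rw [← pow_mul, ← pow_succ]
  simp only [hfr, hfrR, mul_pow, ← Polynomial.C_pow, he, he2, mul_pow, map_add, map_mul]
  ring

/-- For `i ≥ 2`,
`P(t)(ξ_i) = ξ_i + ξ_{i-1}^q t + ξ_{i+1} t^{q^i} + ξ_i^q t^{q^i+1}`. -/
theorem stmt_3 {F : Type*} [Field F] [Fintype F] (s m q : ℕ) (hs : 1 ≤ s)
    (hq : q = 2 ^ s) (hF : Fintype.card F = q) (i : ℕ) (hi : 2 ≤ i) :
    (stP q (Fin m ⊕ Fin m) F) (xiGen q m F i) =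
      Polynomial.C (xiGen q m F i)
      + Polynomial.C (xiGen q m F (i - 1) ^ q) * Polynomial.X
      + Polynomial.C (xiGen q m F (i + 1)) * Polynomial.X ^ q ^ i
      + Polynomial.C (xiGen q m F i ^ q) * Polynomial.X ^ (q ^ i + 1) := by
  haveI hcp : CharP F (ringChar F) := ringChar.charP F
  obtain ⟨n, hpn, hcard⟩ := FiniteField.card F (ringChar F)
  haveI hp2 : CharP F 2 := by
    have h2 : ringChar F ∣ 2 ^ s := by
      rw [← hq, ← hF, hcard]
      exact dvd_pow_self _ (by positivity)
    have := (Nat.prime_dvd_prime_iff_eq hpn Nat.prime_two).mp (hpn.dvd_of_dvd_pow h2)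
    rwa [this] at hcp
  obtain ⟨k, rfl⟩ : ∃ k, i = k + 2 := ⟨i - 2, by omega⟩
  subst hq
  rw [show k + 2 - 1 = k + 1 by omega]
  have hL : (stP (2 ^ s) (Fin m ⊕ Fin m) F) (xiGen (2 ^ s) m F (k + 2)) =
      ∑ j : Fin m,
        (Polynomial.C (X (Sum.inr j) * X (Sum.inl j) ^ (2 ^ s) ^ (k + 2)
            + X (Sum.inl j) * X (Sum.inr j) ^ (2 ^ s) ^ (k + 2))
        + Polynomial.C ((X (Sum.inr j) * X (Sum.inl j) ^ (2 ^ s) ^ (k + 1)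
            + X (Sum.inl j) * X (Sum.inr j) ^ (2 ^ s) ^ (k + 1)) ^ 2 ^ s) * Polynomial.X
        + Polynomial.C (X (Sum.inr j) * X (Sum.inl j) ^ (2 ^ s) ^ (k + 3)
            + X (Sum.inl j) * X (Sum.inr j) ^ (2 ^ s) ^ (k + 3)) * Polynomial.X ^ (2 ^ s) ^ (k + 2)
        + Polynomial.C ((X (Sum.inr j) * X (Sum.inl j) ^ (2 ^ s) ^ (k + 2)
            + X (Sum.inl j) * X (Sum.inr j) ^ (2 ^ s) ^ (k + 2)) ^ 2 ^ s)
            * Polynomial.X ^ ((2 ^ s) ^ (k + 2) + 1)) := by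
    simp only [xiGen, map_sum, map_add, map_mul, map_pow, stP, aeval_X]
    exact Finset.sum_congr rfl fun j _ => by
      simpa only [map_pow, map_add, map_mul] using key s k (X (Sum.inr j) : MvPolynomial (Fin m ⊕ Fin m) F) (X (Sum.inl j))
  rw [hL]
  simp only [Finset.sum_add_distrib, ← Finset.sum_mul, ← map_sum, ← sum_pow_char_pow]
  rw [show k + 2 + 1 = k + 3 by omega]
  simp [xiGen, Finset.sum_add_distrib]
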